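/- arXiv:1201.5992 — 4 statements merged into one kernel-verified Lean document; each statement's English description precedes it below -/
import Mathlib

section
/- Let U ⊆ F_q³ be a set of q² − 2 points that does not determine the points of C. If the line at infinity l(y,z,w) meets C (for some nonzero (y,z,w) ∈ F_q³), then for every x ∈ F_q the affine plane π(x,y,z,w) contains at most q points of U, i.e. |π(x,y,z,w) ∩ U| ≤ q. -/
/-- The dot product on `F³`. -/
def dot3 {F : Type*} [Field F] (u v : F × F × F) : F :=
  u.1 * v.1 + u.2.1 * v.2.1 + u.2.2 * v.2.2

/-- The nondegenerate quadratic form `Q(t₀,t₁,t₂) = t₁² − t₀t₂` defining the conic `C`. -/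
def quadQ {F : Type*} [Field F] (t : F × F × F) : F :=
  t.2.1 ^ 2 - t.1 * t.2.2

/-- `U` does not determine the points of the conic `C`:
`Q(u − u') ≠ 0` for all distinct `u, u' ∈ U`. -/
def NoDetermine {F : Type*} [Field F] (U : Finset (F × F × F)) : Prop :=
  ∀ u ∈ U, ∀ u' ∈ U, u ≠ u' → quadQ (u - u') ≠ 0

/-- The line at infinity `l(y,z,w)` meets the conic `C`. -/
def MeetsConic {F : Type*} [Field F] (v : F × F × F) : Prop :=
  ∃ t : F × F × F, t ≠ 0 ∧ quadQ t = 0 ∧ dot3 v t = 0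

lemma exists_sep {F : Type*} [Field F] (v : F × F × F) (hv : v ≠ 0)
    (hmeet : MeetsConic v) :
    ∃ s : F × F × F, ∀ d : F × F × F, dot3 v d = 0 → dot3 s d = 0 → quadQ d = 0 := by
  obtain ⟨⟨t0, t1, t2⟩, ht0, htQ, htv⟩ := hmeet
  obtain ⟨y, z, w⟩ := v
  simp only [quadQ, dot3, ne_eq, Prod.ext_iff, Prod.fst_zero, Prod.snd_zero,
    Prod.mk.injEq, not_and] at htQ htv ht0 hv
  by_cases h0 : t0 = 0
  · subst h0
    have h1 : t1 = 0 := by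
      have h2 : t1 ^ 2 = 0 := by linear_combination htQ
      exact sq_eq_zero_iff.mp h2
    subst h1
    have h2 : t2 ≠ 0 := fun hc => ht0 rfl rfl hc
    have hw : w = 0 := by
      have hwt : w * t2 = 0 := by linear_combination htv
      exact (mul_eq_zero.mp hwt).resolve_right h2
    subst hw
    by_cases hy : y = 0
    · subst hy
      have hz : z ≠ 0 := fun hc => hv rfl hc rfl
      refine ⟨(1, 0, 0), fun d hvd hsd => ?_⟩
      simp only [dot3, quadQ] at hvd hsd ⊢
      have hd0 : d.1 = 0 := by linear_combination hsd
      have hd1 : d.2.1 = 0 := by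
        have h3 : z * d.2.1 = 0 := by linear_combination hvd
        exact (mul_eq_zero.mp h3).resolve_left hz
      rw [hd0, hd1]; ring
    · refine ⟨(0, 1, 0), fun d hvd hsd => ?_⟩
      simp only [dot3, quadQ] at hvd hsd ⊢
      have hd1 : d.2.1 = 0 := by linear_combination hsd
      have hd0 : d.1 = 0 := by
        have h3 : y * d.1 = 0 := by linear_combination hvd - z * hd1
        exact (mul_eq_zero.mp h3).resolve_left hy
      rw [hd0, hd1]; ring
  · -- t0 ≠ 0
    obtain ⟨m, hm⟩ : ∃ m : F, m = t1 / t0 := ⟨_, rfl⟩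
    have hmt : m * t0 = t1 := by
      rw [hm]; field_simp
    have ht2 : t2 = m ^ 2 * t0 := by
      have h3 : t0 * t2 = t0 * (m ^ 2 * t0) := by
        linear_combination -htQ - (m * t0 + t1) * hmt
      exact mul_left_cancel₀ h0 h3
    have hy : y = -z * m - w * m ^ 2 := by
      have h3 : (y + z * m + w * m ^ 2) * t0 = 0 := by
        linear_combination htv + z * hmt - w * ht2
      have h4 := (mul_eq_zero.mp h3).resolve_right h0
      linear_combination h4
    by_cases hw : w = 0
    · subst hw
      have hz : z ≠ 0 := by
        intro hc
        exact hv (by rw [hy, hc]; ring) hc rfl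
      refine ⟨(0, m, -1), fun d hvd hsd => ?_⟩
      simp only [dot3, quadQ] at hvd hsd ⊢
      have h5 : z * (d.2.1 - m * d.1) = 0 := by
        rw [hy] at hvd; linear_combination hvd
      have hd1 : d.2.1 = m * d.1 := by
        have := (mul_eq_zero.mp h5).resolve_left hz
        linear_combination this
      have hd2 : d.2.2 = m * d.2.1 := by linear_combination -hsd
      rw [hd2, hd1]; ring
    · refine ⟨(-m, 1, 0), fun d hvd hsd => ?_⟩
      simp only [dot3, quadQ] at hvd hsd ⊢
      have hd1 : d.2.1 = m * d.1 := by linear_combination hsd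
      have h5 : w * (d.2.2 - m ^ 2 * d.1) = 0 := by
        rw [hy] at hvd; linear_combination hvd - z * hd1
      have hd2 : d.2.2 = m ^ 2 * d.1 := by
        have := (mul_eq_zero.mp h5).resolve_left hw
        linear_combination this
      rw [hd1, hd2]; ring

lemma dot3_sub {F : Type*} [Field F] (v a b : F × F × F) :
    dot3 v (a - b) = dot3 v a - dot3 v b := by
  simp only [dot3, Prod.fst_sub, Prod.snd_sub]
  ring

theorem stmt_0 {p h : ℕ} (hp : p.Prime) (hodd : Odd p) (hh : 1 ≤ h)
    {F : Type*} [Field F] [Fintype F] [DecidableEq F]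
    (hcard : Fintype.card F = p ^ h)
    (U : Finset (F × F × F))
    (hUcard : U.card = Fintype.card F ^ 2 - 2)
    (hU : NoDetermine U)
    (v : F × F × F) (hv : v ≠ 0) (hmeet : MeetsConic v)
    (x : F) :
    (U.filter (fun a => dot3 v a + x = 0)).card ≤ Fintype.card F := by
  obtain ⟨s, hs⟩ := exists_sep v hv hmeet
  calc (U.filter (fun a => dot3 v a + x = 0)).card
      ≤ (Finset.univ : Finset F).card := by
        apply Finset.card_le_card_of_injOn (fun a => dot3 s a)
        · intro a _; exact Finset.mem_univ _
        · intro a ha b hb hab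
          simp only [Finset.coe_filter, Set.mem_setOf_eq] at ha hb
          have hab' : dot3 s a = dot3 s b := hab
          by_contra hne
          apply hU a ha.1 b hb.1 hne
          apply hs
          · rw [dot3_sub]; linear_combination ha.2 - hb.2
          · rw [dot3_sub]; linear_combination hab'
    _ = Fintype.card F := Finset.card_univ
end

section
/- Let U ⊆ F_q³ be a set of q² − 2 points that does not determine the points of C, and suppose the line at infinity l(y,z,w) meets C for the nonzero triple (y,z,w) ∈ F_q³. Then the Rédei polynomial R(X) = ∏_{u ∈ U} (X + u·(y,z,w)) divides (X^q − X)^q in F_q[X]. -/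
/-- `σ_i(y,z,w)`: the `i`-th elementary symmetric function of the multiset
`{u·(y,z,w) : u ∈ U}`. -/
def sigmaU {F : Type*} [Field F] (U : Finset (F × F × F)) (v : F × F × F) (i : ℕ) : F :=
  (U.val.map (fun u => dot3 u v)).esymm i

/-- Key algebraic lemma: if the line at infinity `v^⊥` contains an isotropic vector `t`
of `Q`, then there is a linear functional `w·` such that any `d ⊥ v` killed by `w·`
is isotropic. -/
lemma key_w {F : Type*} [Field F] (v t : F × F × F) (hv : v ≠ 0) (ht : t ≠ 0)
    (hQ : quadQ t = 0) (hvt : dot3 v t = 0) :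
    ∃ w : F × F × F, ∀ d : F × F × F, dot3 v d = 0 → dot3 w d = 0 → quadQ d = 0 := by
  obtain ⟨v0, v1, v2⟩ := v
  obtain ⟨t0, t1, t2⟩ := t
  simp only [quadQ, dot3] at hQ hvt ⊢
  by_cases hv2 : v2 = 0
  · subst hv2
    by_cases hv1 : v1 = 0
    · subst hv1
      have hv0 : v0 ≠ 0 := by
        intro h; exact hv (by simp [h, Prod.ext_iff])
      refine ⟨(0, 1, 0), fun ⟨d0, d1, d2⟩ h1 h2 => ?_⟩
      simp only at h1 h2 ⊢
      have hd0 : d0 = 0 := by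
        have : v0 * d0 = 0 := by linear_combination h1
        rcases mul_eq_zero.1 this with h | h
        · exact absurd h hv0
        · exact h
      have hd1 : d1 = 0 := by linear_combination h2
      rw [hd0, hd1]; ring
    · refine ⟨(1, 0, 0), fun ⟨d0, d1, d2⟩ h1 h2 => ?_⟩
      simp only at h1 h2 ⊢
      have hd0 : d0 = 0 := by linear_combination h2
      have hd1 : d1 = 0 := by
        have : v1 * d1 = 0 := by linear_combination h1 - v0 * h2
        rcases mul_eq_zero.1 this with h | h
        · exact absurd h hv1
        · exact h
      rw [hd0, hd1]; ring
  · -- v2 ≠ 0; show t0 ≠ 0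
    have ht0 : t0 ≠ 0 := by
      intro h0
      subst h0
      have ht1 : t1 = 0 := by
        have : t1 ^ 2 = 0 := by linear_combination hQ
        exact pow_eq_zero_iff (n := 2) (by norm_num) |>.1 this
      subst ht1
      have ht2 : t2 ≠ 0 := by
        intro h; exact ht (by simp [h, Prod.ext_iff])
      have : v2 * t2 = 0 := by linear_combination hvt
      rcases mul_eq_zero.1 this with h | h
      · exact hv2 h
      · exact ht2 h
    refine ⟨(-t1, t0, 0), fun ⟨d0, d1, d2⟩ h1 h2 => ?_⟩
    simp only at h1 h2 ⊢
    have key : v2 * t0 ^ 2 * (d1 ^ 2 - d0 * d2) = 0 := by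
      linear_combination (v2 * (t0 * d1 + t1 * d0) + v1 * t0 * d0) * h2 - t0 ^ 2 * d0 * h1 +
        v2 * d0 ^ 2 * hQ + t0 * d0 ^ 2 * hvt
    have := mul_eq_zero.1 key
    rcases this with h | h
    · exact absurd h (mul_ne_zero hv2 (pow_ne_zero 2 ht0))
    · exact h

lemma dot3_comm {F : Type*} [Field F] (u v : F × F × F) : dot3 u v = dot3 v u := by
  simp only [dot3]; ring

lemma dot3_sub_left {F : Type*} [Field F] (u u' v : F × F × F) :
    dot3 (u - u') v = dot3 u v - dot3 u' v := by
  obtain ⟨a, b, c⟩ := u; obtain ⟨a', b', c'⟩ := u'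
  simp only [dot3, Prod.mk_sub_mk]; ring

/-- Each affine plane `u·v = a` contains at most `q` points of `U`. -/
lemma fiber_card_le {F : Type*} [Field F] [Fintype F] [DecidableEq F]
    (U : Finset (F × F × F)) (hU : NoDetermine U)
    (v : F × F × F) (hv : v ≠ 0) (hmeet : MeetsConic v) (a : F) :
    (U.filter (fun u => dot3 u v = a)).card ≤ Fintype.card F := by
  obtain ⟨t, ht, hQ, hvt⟩ := hmeet
  obtain ⟨w, hw⟩ := key_w v t hv ht hQ hvt
  have : (U.filter (fun u => dot3 u v = a)).card ≤ (Finset.univ : Finset F).card := by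
    apply Finset.card_le_card_of_injOn (fun u => dot3 u w) (fun _ _ => Finset.mem_univ _)
    intro u hu u' hu' heq
    simp only [Finset.mem_coe, Finset.mem_filter] at hu hu'
    by_contra hne
    refine hU u hu.1 u' hu'.1 hne (hw (u - u') ?_ ?_)
    · rw [dot3_comm, dot3_sub_left, hu.2, hu'.2, sub_self]
    · rw [dot3_comm, dot3_sub_left]; simp only [] at heq; rw [heq, sub_self]
  simpa using this

open Polynomial in
lemma X_pow_card_sub_X_eq_prod (F : Type*) [Field F] [Fintype F] [DecidableEq F] :
    (X ^ Fintype.card F - X : F[X]) = ∏ a : F, (X - C a) := by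
  have h1 : (1 : ℕ) < Fintype.card F := Fintype.one_lt_card
  have hmonic : (X ^ Fintype.card F - X : F[X]).Monic := by
    apply monic_X_pow_sub
    rw [degree_X]
    exact_mod_cast h1
  have hroots : (X ^ Fintype.card F - X : F[X]).roots = Finset.univ.val :=
    FiniteField.roots_X_pow_card_sub_X F
  have hdeg : (X ^ Fintype.card F - X : F[X]).natDegree = Fintype.card F :=
    FiniteField.X_pow_card_sub_X_natDegree_eq F h1
  have := prod_multiset_X_sub_C_of_monic_of_roots_card_eq hmonic
    (by rw [hroots, hdeg]; simp [Finset.card_univ])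
  rw [hroots] at this
  rw [← this]
  rfl

open Polynomial in
theorem stmt_1 {p h : ℕ} (hp : p.Prime) (hodd : Odd p) (hh : 1 ≤ h)
    {F : Type*} [Field F] [Fintype F] [DecidableEq F]
    (hcard : Fintype.card F = p ^ h)
    (U : Finset (F × F × F))
    (hUcard : U.card = Fintype.card F ^ 2 - 2)
    (hU : NoDetermine U)
    (v : F × F × F) (hv : v ≠ 0) (hmeet : MeetsConic v) :
    (∏ u ∈ U, (X + C (dot3 u v))) ∣ (X ^ Fintype.card F - X) ^ Fintype.card F := by
  set q := Fintype.card F with hq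
  have hfib : ∀ b : F, (U.filter (fun u => dot3 u v = b)).card ≤ q :=
    fiber_card_le U hU v hv hmeet
  have hsplit : (X ^ q - X : F[X]) = ∏ a : F, (X - C a) := X_pow_card_sub_X_eq_prod F
  have hneg : (∏ a : F, (X + C a : F[X])) = ∏ a : F, (X - C a) := by
    apply Fintype.prod_equiv (Equiv.neg F)
    intro b
    simp [Equiv.neg_apply, sub_neg_eq_add]
  calc (∏ u ∈ U, (X + C (dot3 u v)))
      = ∏ b : F, ∏ u ∈ U.filter (fun u => dot3 u v = b), (X + C (dot3 u v)) :=
        (Finset.prod_fiberwise U (fun u => dot3 u v) (fun u => X + C (dot3 u v))).symm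
    _ = ∏ b : F, (X + C b) ^ (U.filter (fun u => dot3 u v = b)).card := by
        refine Finset.prod_congr rfl fun b _ => ?_
        rw [← Finset.prod_const]
        refine Finset.prod_congr rfl fun u hu => ?_
        rw [(Finset.mem_filter.1 hu).2]
    _ ∣ ∏ b : F, (X + C b) ^ q :=
        Finset.prod_dvd_prod_of_dvd _ _ (fun b _ => pow_dvd_pow _ (hfib b))
    _ = (X ^ q - X) ^ q := by rw [Finset.prod_pow, hneg, ← hsplit]
end

section
/- Let U ⊆ F_q³ be a set of q² − 2 points that does not determine the points of C, with ∑_{u∈U} u = (0,0,0). If the line at infinity l(y,z,w) meets C for the nonzero triple (y,z,w) ∈ F_q³, then in F_q[X] one has the exact identity (∏_{u ∈ U} (X + u·(y,z,w))) · (X² − σ₂(y,z,w)) = (X^q − X)^q. -/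
lemma lemA {F : Type*} [Field F] (v t : F × F × F) (hv : v ≠ 0) (ht : t ≠ 0)
    (hQ : quadQ t = 0) (hvt : dot3 v t = 0) :
    ∃ m : F × F × F, ∀ d : F × F × F, dot3 d v = 0 → dot3 d m = 0 → quadQ d = 0 := by
  obtain ⟨t₀, t₁, t₂⟩ := t
  obtain ⟨v₀, v₁, v₂⟩ := v
  simp only [quadQ, dot3] at hQ hvt
  have hv' : ¬(v₀ = 0 ∧ v₁ = 0 ∧ v₂ = 0) := by
    simpa [Prod.ext_iff] using hv
  by_cases h0 : t₀ = 0
  · subst h0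
    have ht1 : t₁ = 0 := by
      have h2 : t₁ ^ 2 = 0 := by linear_combination hQ
      exact pow_eq_zero_iff (two_ne_zero) |>.mp h2
    subst ht1
    have ht2 : t₂ ≠ 0 := by
      simpa [Prod.ext_iff] using ht
    have hv2 : v₂ = 0 := by
      have h3 : v₂ * t₂ = 0 := by linear_combination hvt
      exact (mul_eq_zero.mp h3).resolve_right ht2
    by_cases h1 : v₁ = 0
    · have hv0 : v₀ ≠ 0 := by tauto
      refine ⟨(0, 1, 0), ?_⟩
      rintro ⟨d₀, d₁, d₂⟩ hd1 hd2
      simp only [quadQ, dot3] at hd1 hd2 ⊢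
      have hd0 : d₀ = 0 := by
        have h4 : d₀ * v₀ = 0 := by linear_combination hd1 - d₁ * h1 - d₂ * hv2
        exact (mul_eq_zero.mp h4).resolve_right hv0
      have hd1' : d₁ = 0 := by linear_combination hd2
      rw [hd0, hd1']; ring
    · refine ⟨(1, 0, 0), ?_⟩
      rintro ⟨d₀, d₁, d₂⟩ hd1 hd2
      simp only [quadQ, dot3] at hd1 hd2 ⊢
      have hd0 : d₀ = 0 := by linear_combination hd2
      have hd1' : d₁ = 0 := by
        have h4 : d₁ * v₁ = 0 := by linear_combination hd1 - v₀ * hd0 - d₂ * hv2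
        exact (mul_eq_zero.mp h4).resolve_right h1
      rw [hd0, hd1']; ring
  · by_cases h2 : v₂ = 0
    · -- v₁ ≠ 0 case, m = (0, t₁, -t₀)
      have hv1 : v₁ ≠ 0 := by
        intro h1
        have hv0 : v₀ = 0 := by
          have h4 : v₀ * t₀ = 0 := by linear_combination hvt - t₁ * h1 - t₂ * h2
          exact (mul_eq_zero.mp h4).resolve_right h0
        exact hv' ⟨hv0, h1, h2⟩
      refine ⟨(0, t₁, -t₀), ?_⟩
      rintro ⟨d₀, d₁, d₂⟩ hd1 hd2
      simp only [quadQ, dot3] at hd1 hd2 ⊢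
      have key : v₁ * t₀ ^ 2 * (d₁ ^ 2 - d₀ * d₂) = 0 := by
        linear_combination (d₁ * t₀ * t₀) * hd1 - (d₁ * t₀ * d₀) * hvt -
          (d₁ * t₀ * (t₀ * d₂ - t₂ * d₀)) * h2 + (v₁ * t₀ * d₀) * hd2
      have h5 := mul_eq_zero.mp key
      rcases h5 with h5 | h5
      · exact absurd h5 (mul_ne_zero hv1 (pow_ne_zero 2 h0))
      · exact h5
    · -- m = (t₁, -t₀, 0)
      refine ⟨(t₁, -t₀, 0), ?_⟩
      rintro ⟨d₀, d₁, d₂⟩ hd1 hd2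
      simp only [quadQ, dot3] at hd1 hd2 ⊢
      have key : v₂ * t₀ ^ 2 * (d₁ ^ 2 - d₀ * d₂) = 0 := by
        linear_combination -(v₂ * (t₀ * d₁ + t₁ * d₀) + t₀ * d₀ * v₁) * hd2 +
          (v₂ * d₀ ^ 2) * hQ - (t₀ ^ 2 * d₀) * hd1 + (t₀ * d₀ ^ 2) * hvt
      have h5 := mul_eq_zero.mp key
      rcases h5 with h5 | h5
      · exact absurd h5 (mul_ne_zero h2 (pow_ne_zero 2 h0))
      · exact h5

open Polynomial in
theorem stmt_2 {p h : ℕ} (hp : p.Prime) (hodd : Odd p) (hh : 1 ≤ h)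
    {F : Type*} [Field F] [Fintype F] [DecidableEq F]
    (hcard : Fintype.card F = p ^ h)
    (U : Finset (F × F × F))
    (hUcard : U.card = Fintype.card F ^ 2 - 2)
    (hU : NoDetermine U)
    (hsum : ∑ u ∈ U, u = 0)
    (v : F × F × F) (hv : v ≠ 0) (hmeet : MeetsConic v) :
    (∏ u ∈ U, (X + C (dot3 u v))) * (X ^ 2 - C (sigmaU U v 2)) =
      (X ^ Fintype.card F - X) ^ Fintype.card F := by
  classical
  haveI : Fact p.Prime := ⟨hp⟩
  set q := Fintype.card F with hq
  -- numerics
  have hp3 : 3 ≤ p := by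
    have h2 := hp.two_le
    have : p ≠ 2 := by rintro rfl; rcases hodd with ⟨k, hk⟩; omega
    omega
  have hq3 : 3 ≤ q := by
    rw [hcard]
    calc 3 ≤ p := hp3
    _ ≤ p ^ h := Nat.le_self_pow (by omega) p
  have hq9 : 9 ≤ q * q := Nat.mul_le_mul hq3 hq3
  have hqq : q ^ 2 = q * q := by ring
  have hq3q : 3 * q ≤ q * q := Nat.mul_le_mul_right q hq3
  -- characteristic
  haveI hcharF : CharP F p := by
    have hdvd : ringChar F ∣ p ^ h := by
      rw [← hcard]
      exact (CharP.cast_eq_zero_iff F (ringChar F) (Fintype.card F)).mp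
        (FiniteField.cast_card_eq_zero F)
    have hrp : (ringChar F).Prime := CharP.char_is_prime F (ringChar F)
    have hrpp : ringChar F = p :=
      (Nat.prime_dvd_prime_iff_eq hrp hp).mp (hrp.dvd_of_dvd_pow hdvd)
    rw [← hrpp]
    exact ringChar.charP F
  obtain ⟨t, ht0, htQ, hvt⟩ := hmeet
  obtain ⟨m, hm⟩ := lemA v t hv ht0 htQ hvt
  set D : Multiset F := U.val.map (fun u => dot3 u v) with hD
  have dotsub : ∀ (a b x : F × F × F), dot3 (a - b) x = dot3 a x - dot3 b x := by
    intro a b x; simp only [dot3, Prod.fst_sub, Prod.snd_sub]; ring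
  -- fiber count bound
  have hcount : ∀ a : F, D.count a ≤ q := by
    intro a
    rw [hD, Multiset.count_map]
    have heq : U.val.filter (fun u => a = dot3 u v) = (U.filter (fun u => a = dot3 u v)).val :=
      (Finset.filter_val _ _).symm
    rw [heq]
    have hle : (U.filter (fun u => a = dot3 u v)).card ≤ (Finset.univ : Finset F).card := by
      apply Finset.card_le_card_of_injOn (fun u => dot3 u m)
      · intro _ _; exact Finset.mem_univ _
      · intro u hu u' hu' hmm
        by_contra hne
        simp only [Finset.coe_filter, Set.mem_setOf_eq] at hu hu'
        refine hU u hu.1 u' hu'.1 hne (hm (u - u') ?_ ?_)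
        · rw [dotsub, ← hu.2, ← hu'.2, sub_self]
        · simp only at hmm
          rw [dotsub, hmm, sub_self]
    rw [Finset.card_univ] at hle; exact hle
  set N : Multiset F := q • (Finset.univ.val : Multiset F) with hN
  have hDN : D ≤ N := by
    rw [Multiset.le_iff_count]
    intro a
    rw [hN, Multiset.count_nsmul, Multiset.count_univ, mul_one]
    exact hcount a
  have hcardD : Multiset.card D = q ^ 2 - 2 := by
    rw [hD, Multiset.card_map]; exact hUcard
  have hcardN : Multiset.card N = q * q := by
    rw [hN, Multiset.card_nsmul]
    simp [Finset.card_univ, hq]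
  have hDE : D + (N - D) = N := add_tsub_cancel_of_le hDN
  have hcardE : Multiset.card (N - D) = 2 := by
    rw [Multiset.card_sub hDN, hcardD, hcardN, hqq]
    omega
  obtain ⟨r₁, r₂, hE⟩ := Multiset.card_eq_two.mp hcardE
  -- sums
  have hsum1 : ∑ u ∈ U, (u : F × F × F).1 = 0 := by
    have h1 := map_sum (AddMonoidHom.fst F (F × F)) (fun u => u) U
    rw [hsum] at h1
    simpa using h1.symm
  have hsum2 : ∑ u ∈ U, (u : F × F × F).2.1 = 0 := by
    have h1 := map_sum ((AddMonoidHom.fst F F).comp (AddMonoidHom.snd F (F × F))) (fun u => u) U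
    rw [hsum] at h1
    simpa using h1.symm
  have hsum3 : ∑ u ∈ U, (u : F × F × F).2.2 = 0 := by
    have h1 := map_sum ((AddMonoidHom.snd F F).comp (AddMonoidHom.snd F (F × F))) (fun u => u) U
    rw [hsum] at h1
    simpa using h1.symm
  have hsumD : D.sum = 0 := by
    rw [hD]
    have h1 : (U.val.map fun u => dot3 u v).sum = ∑ u ∈ U, dot3 u v :=
      (Finset.sum_eq_multiset_sum U (fun u => dot3 u v)).symm
    rw [h1]
    simp only [dot3, Finset.sum_add_distrib, ← Finset.sum_mul, hsum1, hsum2, hsum3]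
    ring
  have hsumN : N.sum = 0 := by
    have h1 : N.sum = q • (Finset.univ.val : Multiset F).sum := by
      rw [hN]
      exact map_nsmul Multiset.sumAddMonoidHom q (Finset.univ.val : Multiset F)
    rw [h1, nsmul_eq_mul]
    rw [show ((q : F)) = 0 from FiniteField.cast_card_eq_zero F, zero_mul]
  have hr12 : r₂ = -r₁ := by
    have h1 : D.sum + (N - D).sum = N.sum := by rw [← Multiset.sum_add, hDE]
    rw [hE, hsumD, hsumN] at h1
    simp only [Multiset.insert_eq_cons, Multiset.sum_cons, Multiset.sum_singleton] at h1
    linear_combination h1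
  -- full product
  have hfull : ((Finset.univ.val : Multiset F).map (fun a : F => X + C a)).prod
      = (X : F[X]) ^ q - X := by
    have hmono : ((X : F[X]) ^ q - X).Monic := by
      apply Polynomial.monic_X_pow_sub
      rw [Polynomial.degree_X]
      exact_mod_cast (by omega : 1 < q)
    have hroots : ((X : F[X]) ^ q - X).roots = Finset.univ.val :=
      FiniteField.roots_X_pow_card_sub_X F
    have hdeg : ((X : F[X]) ^ q - X).natDegree = q :=
      FiniteField.X_pow_card_sub_X_natDegree_eq F (by omega : 1 < q)
    have hcr : Multiset.card ((X : F[X]) ^ q - X).roots = ((X : F[X]) ^ q - X).natDegree := by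
      rw [hroots, hdeg]
      simp [Finset.card_univ, hq]
    have h1 := Polynomial.prod_multiset_X_sub_C_of_monic_of_roots_card_eq hmono hcr
    rw [hroots] at h1
    have h2 : ((Finset.univ.val : Multiset F).map (fun a : F => X + C a))
        = (((Finset.univ.val : Multiset F).map (fun a : F => -a)).map
            (fun a : F => X - C a)) := by
      rw [Multiset.map_map]
      apply Multiset.map_congr rfl
      intro x _
      simp [sub_neg_eq_add]
    have h3 : (Finset.univ.val : Multiset F).map (fun a : F => -a)
        = (Finset.univ.val : Multiset F) := by
      have h4 := Multiset.map_univ_val_equiv (Equiv.neg F)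
      simpa using h4
    rw [h2, h3, h1]
  have hNprod : (N.map (fun a : F => X + C a)).prod = ((X : F[X]) ^ q - X) ^ q := by
    rw [hN, Multiset.map_nsmul, Multiset.prod_nsmul, hfull]
  set P : F[X] := (D.map (fun a : F => X + C a)).prod with hPdef
  have hsplit : (N.map (fun a : F => X + C a)).prod = P * ((X + C r₁) * (X + C r₂)) := by
    rw [← hDE, Multiset.map_add, Multiset.prod_add, hE]
    simp [Multiset.insert_eq_cons, hPdef]
  have hfac : ((X : F[X]) + C r₁) * (X + C r₂) = X ^ 2 - C (r₁ ^ 2) := by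
    rw [hr12, map_neg, map_pow]; ring
  have hmain : P * ((X : F[X]) ^ 2 - C (r₁ ^ 2)) = ((X : F[X]) ^ q - X) ^ q := by
    rw [← hfac, ← hsplit, hNprod]
  -- Frobenius
  have hfrob : ((X : F[X]) ^ q - X) ^ q = X ^ (q * q) - X ^ q := by
    haveI : CharP F[X] p := Polynomial.instCharP p
    rw [hcard]
    rw [sub_pow_char_pow]
    rw [← pow_mul]
  -- coefficients
  have hPc0 : P.coeff (q ^ 2 - 2) = 1 := by
    rw [hPdef, Multiset.prod_X_add_C_coeff D (le_of_eq hcardD.symm), hcardD, Nat.sub_self]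
    simp [Multiset.esymm]
  have hPc2 : P.coeff (q ^ 2 - 4) = sigmaU U v 2 := by
    rw [hPdef, Multiset.prod_X_add_C_coeff D (by rw [hcardD]; omega)]
    have h1 : Multiset.card D - (q ^ 2 - 4) = 2 := by rw [hcardD]; omega
    rw [h1]
    rfl
  have hco := congrArg (fun g : F[X] => g.coeff (q ^ 2 - 2)) (hmain.trans hfrob)
  simp only [mul_sub, Polynomial.coeff_sub] at hco
  rw [show P * C (r₁ ^ 2) = C (r₁ ^ 2) * P from mul_comm _ _] at hco
  rw [Polynomial.coeff_C_mul] at hco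
  rw [Polynomial.coeff_mul_X_pow'] at hco
  rw [if_pos (by omega : 2 ≤ q ^ 2 - 2)] at hco
  rw [show q ^ 2 - 2 - 2 = q ^ 2 - 4 by omega] at hco
  rw [hPc2, hPc0, mul_one] at hco
  rw [Polynomial.coeff_X_pow, Polynomial.coeff_X_pow] at hco
  rw [if_neg (by omega : ¬(q ^ 2 - 2 = q * q)), if_neg (by omega : ¬(q ^ 2 - 2 = q))] at hco
  have hsig : sigmaU U v 2 = r₁ ^ 2 := by linear_combination hco
  -- conclude
  have hPgoal : (∏ u ∈ U, ((X : F[X]) + C (dot3 u v))) = P := by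
    rw [Finset.prod_eq_multiset_prod, hPdef, hD, Multiset.map_map]
    rfl
  rw [hPgoal, hsig, hmain, hfrob]
end

section
/- Let U ⊆ F_q³ be a set of q² − 2 points that does not determine the points of C, with ∑_{u∈U} u = (0,0,0), and suppose the line at infinity l(y,z,w) meets C for the nonzero triple (y,z,w). Then σ_{q²−q+2k}(y,z,w) = σ₂(y,z,w)^{(q²−q+2k)/2} − σ₂(y,z,w)^k for all integers k with 0 ≤ k ≤ (q − 3)/2. -/
lemma prod_ne_zero_iff' {F : Type*} [Field F] (v : F × F × F) :
    v ≠ 0 ↔ ¬ (v.1 = 0 ∧ v.2.1 = 0 ∧ v.2.2 = 0) := by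
  constructor
  · rintro h ⟨h1, h2, h3⟩
    exact h (Prod.ext h1 (Prod.ext h2 h3))
  · intro h hv
    exact h ⟨by rw [hv]; rfl, by rw [hv]; rfl, by rw [hv]; rfl⟩

lemma exists_w0 {F : Type*} [Field F] (v : F × F × F) (hv : v ≠ 0) (hm : MeetsConic v) :
    ∃ w₀ : F × F × F, ∀ δ : F × F × F, dot3 δ v = 0 → dot3 δ w₀ = 0 → quadQ δ = 0 := by
  obtain ⟨t, ht0, htQ, htv⟩ := hm
  simp only [quadQ] at htQ
  simp only [dot3] at htv
  by_cases h0 : t.1 = 0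
  · have h1 : t.2.1 = 0 := by
      have h' : t.2.1 ^ 2 = 0 := by rw [h0] at htQ; linear_combination htQ
      exact pow_eq_zero_iff (n := 2) (by norm_num) |>.mp h'
    have h2 : t.2.2 ≠ 0 := fun h2 => ht0 (Prod.ext h0 (Prod.ext h1 h2))
    have hw : v.2.2 = 0 := by
      rw [h0, h1] at htv
      have : v.2.2 * t.2.2 = 0 := by linear_combination htv
      exact (mul_eq_zero.mp this).resolve_right h2
    by_cases hy : v.1 = 0
    · have hz : v.2.1 ≠ 0 := fun hz => (prod_ne_zero_iff' v).mp hv ⟨hy, hz, hw⟩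
      refine ⟨(1, 0, 0), fun δ hδv hδw => ?_⟩
      simp only [dot3] at hδv hδw
      have hδ1 : δ.1 = 0 := by linear_combination hδw
      have : δ.2.1 * v.2.1 = 0 := by rw [hy, hw] at hδv; linear_combination hδv
      have hδ2 : δ.2.1 = 0 := (mul_eq_zero.mp this).resolve_right hz
      simp only [quadQ, hδ1, hδ2]; ring
    · refine ⟨(0, 1, 0), fun δ hδv hδw => ?_⟩
      simp only [dot3] at hδv hδw
      have hδ2 : δ.2.1 = 0 := by linear_combination hδw
      have : δ.1 * v.1 = 0 := by rw [hδ2, hw] at hδv; linear_combination hδv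
      have hδ1 : δ.1 = 0 := (mul_eq_zero.mp this).resolve_right hy
      simp only [quadQ, hδ1, hδ2]; ring
  · set s := t.2.1 / t.1 with hs
    have ht1 : t.2.1 = s * t.1 := by rw [hs, div_mul_cancel₀ _ h0]
    have ht2 : t.2.2 = s ^ 2 * t.1 := by
      rw [hs, div_pow, div_mul_eq_mul_div, eq_div_iff (pow_ne_zero 2 h0)]
      linear_combination -t.1 * htQ
    have hline : v.1 + v.2.1 * s + v.2.2 * s ^ 2 = 0 := by
      have : t.1 * (v.1 + v.2.1 * s + v.2.2 * s ^ 2) = 0 := by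
        rw [ht1, ht2] at htv; linear_combination htv
      exact (mul_eq_zero.mp this).resolve_left h0
    by_cases hw : v.2.2 = 0
    · have hz : v.2.1 ≠ 0 := by
        intro hz
        have hy : v.1 = 0 := by rw [hz, hw] at hline; linear_combination hline
        exact (prod_ne_zero_iff' v).mp hv ⟨hy, hz, hw⟩
      have hy : v.1 = -(v.2.1 * s) := by rw [hw] at hline; linear_combination hline
      refine ⟨(0, -s, 1), fun δ hδv hδw => ?_⟩
      simp only [dot3] at hδv hδw
      have h21 : δ.2.1 = s * δ.1 := by
        have : v.2.1 * (δ.2.1 - s * δ.1) = 0 := by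
          rw [hy, hw] at hδv; linear_combination hδv
        have := (mul_eq_zero.mp this).resolve_left hz
        linear_combination this
      have h22 : δ.2.2 = s * δ.2.1 := by linear_combination hδw
      simp only [quadQ, h22, h21]; ring
    · refine ⟨(-s, 1, 0), fun δ hδv hδw => ?_⟩
      simp only [dot3] at hδv hδw
      have h21 : δ.2.1 = s * δ.1 := by linear_combination hδw
      have h22 : δ.2.2 = s ^ 2 * δ.1 := by
        have : v.2.2 * (δ.2.2 - s ^ 2 * δ.1) = 0 := by
          rw [h21] at hδv
          linear_combination hδv - δ.1 * hline
        have := (mul_eq_zero.mp this).resolve_left hw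
        linear_combination this
      simp only [quadQ, h21, h22]; ring


open Polynomial

/-- coefficient extraction for multiplication by a quadratic -/
lemma coeff_mul_quad {F : Type*} [Field F] (R : F[X]) (e f : F) (j : ℕ) :
    (R * (X ^ 2 - C e * X + C f)).coeff (j + 2) =
      R.coeff j - e * R.coeff (j + 1) + f * R.coeff (j + 2) := by
  have h1 : R * (X ^ 2 - C e * X + C f) = R * X ^ 2 - (C e * R) * X + R * C f := by ring
  rw [h1, coeff_add, coeff_sub, coeff_mul_X_pow]
  rw [show j + 2 = (j + 1) + 1 from rfl, coeff_mul_X, coeff_C_mul, coeff_mul_C]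
  ring

/-- grouping a multiset product over the universe -/
lemma prod_map_eq_prod_univ {F : Type*} [Fintype F] [DecidableEq F] [CommRing F]
    (T : Multiset F) (g : F → Polynomial F) :
    (T.map g).prod = ∏ c : F, g c ^ T.count c := by
  rw [Finset.prod_multiset_map_count]
  refine Finset.prod_subset (Finset.subset_univ _) (fun c _ hc => ?_)
  rw [Multiset.count_eq_zero_of_notMem (by simpa [Multiset.mem_toFinset] using hc), pow_zero]

theorem stmt_5 {p h : ℕ} (hp : p.Prime) (hodd : Odd p) (hh : 1 ≤ h)
    {F : Type*} [Field F] [Fintype F] [DecidableEq F]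
    (hcard : Fintype.card F = p ^ h)
    (U : Finset (F × F × F))
    (hUcard : U.card = Fintype.card F ^ 2 - 2)
    (hU : NoDetermine U)
    (hsum : ∑ u ∈ U, u = 0)
    (v : F × F × F) (hv : v ≠ 0) (hmeet : MeetsConic v) :
    ∀ k : ℕ, k ≤ (Fintype.card F - 3) / 2 →
      sigmaU U v (Fintype.card F ^ 2 - Fintype.card F + 2 * k) =
        sigmaU U v 2 ^ ((Fintype.card F ^ 2 - Fintype.card F + 2 * k) / 2) -
          sigmaU U v 2 ^ k := by
  classical
  set q := Fintype.card F with hqdef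
  -- basic numerology
  have hp3 : 3 ≤ p := by
    have h2 := hp.two_le
    by_contra hlt
    interval_cases p
    exact absurd hodd (by decide)
  have hq3 : 3 ≤ q := le_trans hp3 (hcard ▸ Nat.le_self_pow (by omega) p)
  set Q2 := q ^ 2 with hQ2def
  have hQ2 : Q2 = q * q := sq q
  have hlin : 3 * q ≤ Q2 := by nlinarith
  obtain ⟨M, hM⟩ : ∃ M, Q2 - q = 2 * M := by
    obtain ⟨q', hq'⟩ : ∃ q', q = q' + 1 := ⟨q - 1, by omega⟩
    have e1 : Q2 = q' * (q' + 1) + q := by rw [hQ2, hq']; ring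
    have e2 : Q2 - q = q' * (q' + 1) := by rw [e1, Nat.add_sub_cancel]
    obtain ⟨m, hm⟩ := Nat.even_mul_succ_self q'
    exact ⟨m, by rw [e2, hm]; ring⟩
  have hM3 : 3 ≤ M := by omega
  -- charP
  have hcharF : CharP F p := by
    have hcr := ringChar.charP F
    obtain ⟨n, hrp, hcn⟩ := FiniteField.card F (ringChar F)
    have : p = ringChar F := by
      have hdvd : p ∣ (ringChar F) ^ (n : ℕ) := by
        rw [← hcn, ← hqdef]  -- q = ringChar ^ n ... hcn : q = ringChar F ^ n
        exact hcard ▸ dvd_pow_self p (by omega)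
      exact ((Nat.prime_dvd_prime_iff_eq hp hrp).mp (hp.dvd_of_dvd_pow hdvd))
    rwa [this]
  have hcharFX : CharP (Polynomial F) p := Polynomial.instCharP p
  -- the value multiset
  obtain ⟨w₀, hw₀⟩ := exists_w0 v hv hmeet
  set sU : Multiset F := U.val.map (fun u => dot3 u v) with hsUdef
  have hscard : Multiset.card sU = Q2 - 2 := by
    rw [hsUdef, Multiset.card_map]; exact hUcard
  -- fibre bound
  have hm_le : ∀ c : F, sU.count c ≤ q := by
    intro c
    rw [hsUdef, Multiset.count_map]
    have : (U.val.filter (fun u => c = dot3 u v)).card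
        = (U.filter (fun u => c = dot3 u v)).card := rfl
    rw [this]
    calc (U.filter (fun u => c = dot3 u v)).card
        ≤ (Finset.univ : Finset F).card := by
          apply Finset.card_le_card_of_injOn (fun u => dot3 u w₀)
            (fun u _ => Finset.mem_univ _)
          intro u hu u' hu' heq
          simp only [Finset.coe_filter, Set.mem_setOf_eq] at hu hu'
          replace heq : dot3 u w₀ = dot3 u' w₀ := heq
          by_contra hne
          apply hU u hu.1 u' hu'.1 hne
          apply hw₀
          · rw [dot3_sub_left, ← hu.2, ← hu'.2, sub_self]
          · rw [dot3_sub_left, heq, sub_self]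
      _ = q := Finset.card_univ
  -- sum of counts
  have hsum_count : ∑ c : F, sU.count c = Q2 - 2 := by
    rw [← hscard, ← Multiset.toFinset_sum_count_eq]
    exact (Finset.sum_subset (Finset.subset_univ _) (fun c _ hc => by
      rw [Multiset.count_eq_zero_of_notMem (by simpa [Multiset.mem_toFinset] using hc)])).symm
  -- the deficiency multiset
  set dd : F → ℕ := fun c => q - sU.count c with hdd
  set wM : Multiset F := Finset.univ.val.bind (fun c => Multiset.replicate (dd c) c) with hwM
  have hwcount : ∀ c : F, wM.count c = dd c := by
    intro c
    rw [hwM, Multiset.count_bind]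
    have : (Finset.univ.val.map (fun b => Multiset.count c (Multiset.replicate (dd b) b))).sum
        = ∑ b : F, if c = b then dd b else 0 := by
      rw [Finset.sum]
      congr 1
      apply Multiset.map_congr rfl
      intro b _
      rw [Multiset.count_replicate]; simp [eq_comm]
    rw [this, Finset.sum_ite_eq (Finset.univ) c dd]
    simp
  have hwcard : Multiset.card wM = 2 := by
    have h1 : Multiset.card wM = ∑ c : F, dd c := by
      rw [hwM, Multiset.card_bind]
      rw [Finset.sum]
      congr 1
      apply Multiset.map_congr rfl
      intro b _
      simp
    have h2 : ∑ c : F, (dd c + sU.count c) = q * q := by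
      have : ∀ c : F, dd c + sU.count c = q := fun c => Nat.sub_add_cancel (hm_le c)
      rw [Finset.sum_congr rfl (fun c _ => this c), Finset.sum_const, Finset.card_univ,
        smul_eq_mul, mul_comm]
    rw [Finset.sum_add_distrib, hsum_count] at h2
    omega
  have hfull : ∀ c : F, (sU + wM).count c = q := by
    intro c
    rw [Multiset.count_add, hwcount c, hdd]
    exact Nat.add_sub_cancel' (hm_le c)
  -- product over all of F
  have hmono : (X ^ q - X : F[X]).Monic :=
    monic_X_pow_sub (by rw [degree_X]; exact_mod_cast by omega)
  have hroots : (X ^ q - X : F[X]).roots = Finset.univ.val :=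
    FiniteField.roots_X_pow_card_sub_X F
  have hnd : (X ^ q - X : F[X]).natDegree = q :=
    FiniteField.X_pow_card_sub_X_natDegree_eq F (by omega)
  have hXqX : ∏ c : F, (X - C c) = (X ^ q - X : F[X]) := by
    have := prod_multiset_X_sub_C_of_monic_of_roots_card_eq hmono
      (by rw [hroots, hnd]; exact Finset.card_univ)
    rw [hroots] at this
    rw [Finset.prod_eq_multiset_prod]
    exact this
  -- the big product identity
  have hbig : ((sU + wM).map (fun c => X - C c)).prod = (X ^ Q2 - X ^ q : F[X]) := by
    rw [prod_map_eq_prod_univ]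
    have h1 : ∏ c : F, (X - C c) ^ (sU + wM).count c = ∏ c : F, (X - C c) ^ q :=
      Finset.prod_congr rfl (fun c _ => by rw [hfull c])
    rw [h1, Finset.prod_pow, hXqX]
    have h2 : ((X ^ q - X : F[X])) ^ q = (X ^ q) ^ q - X ^ q := by
      haveI : Fact p.Prime := ⟨hp⟩
      rw [hcard]
      exact sub_pow_char_pow ..
    rw [h2, ← pow_mul, ← hQ2]
  -- split into R and the quadratic part
  set R : Polynomial F := (sU.map (fun c => X - C c)).prod with hR
  obtain ⟨a, b, hab⟩ := Multiset.card_eq_two.mp hwcard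
  have hDw : (wM.map (fun c => X - C c)).prod = (X - C a) * (X - C b) := by
    rw [hab]
    simp [Multiset.insert_eq_cons, Multiset.map_cons, Multiset.map_singleton,
      Multiset.prod_cons, Multiset.prod_singleton]
  have hprod : R * ((X - C a) * (X - C b)) = X ^ Q2 - X ^ q := by
    rw [hR, ← hDw, ← Multiset.prod_add, ← Multiset.map_add]
    exact hbig
  -- coefficients of R
  have hRdeg : R.natDegree = Q2 - 2 := by
    rw [hR, Polynomial.natDegree_multiset_prod_of_monic _ (by
      intro f hf
      obtain ⟨c, _, rfl⟩ := Multiset.mem_map.mp hf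
      exact monic_X_sub_C c)]
    simp [Multiset.map_map, Function.comp, natDegree_X_sub_C, Multiset.map_const',
      Multiset.sum_replicate, hscard]
  have hRcoeff : ∀ j, j ≤ Q2 - 2 → R.coeff j = (-1) ^ (Q2 - 2 - j) * sU.esymm (Q2 - 2 - j) := by
    intro j hj
    have := Multiset.prod_X_sub_C_coeff sU (k := j) (by rw [hscard]; exact hj)
    rw [hscard] at this
    exact this
  have hRtop : ∀ j, Q2 - 2 < j → R.coeff j = 0 := fun j hj =>
    coeff_eq_zero_of_natDegree_lt (by rw [hRdeg]; exact hj)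
  set sig2 : F := sU.esymm 2 with hsig2
  have hesymm0 : sU.esymm 0 = 1 := by
    simp [Multiset.esymm, Multiset.powersetCard_zero_left]
  have hesymm1 : sU.esymm 1 = 0 := by
    have h1 : sU.esymm 1 = sU.sum := by
      simp [Multiset.esymm, Multiset.powersetCard_one, Multiset.map_map, Function.comp]
    rw [h1, hsUdef]
    have h2 : (U.val.map (fun u => dot3 u v)).sum = ∑ u ∈ U, dot3 u v := rfl
    rw [h2]
    have hf : ∑ u ∈ U, u.1 = 0 := by rw [← Prod.fst_sum, hsum]; rfl
    have hs1 : ∑ u ∈ U, u.2.1 = 0 := by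
      have : ∑ u ∈ U, u.2 = 0 := by rw [← Prod.snd_sum, hsum]; rfl
      rw [← Prod.fst_sum, this]; rfl
    have hs2 : ∑ u ∈ U, u.2.2 = 0 := by
      have : ∑ u ∈ U, u.2 = 0 := by rw [← Prod.snd_sum, hsum]; rfl
      rw [← Prod.snd_sum, this]; rfl
    simp only [dot3]
    rw [Finset.sum_add_distrib, Finset.sum_add_distrib, ← Finset.sum_mul, ← Finset.sum_mul,
      ← Finset.sum_mul, hf, hs1, hs2]
    ring
  have hRn : R.coeff (Q2 - 2) = 1 := by
    rw [hRcoeff _ le_rfl, Nat.sub_self, pow_zero, hesymm0, one_mul]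
  have hRn1 : R.coeff (Q2 - 3) = 0 := by
    rw [hRcoeff _ (by omega), show Q2 - 2 - (Q2 - 3) = 1 from by omega, hesymm1, mul_zero]
  have hRn2 : R.coeff (Q2 - 4) = sig2 := by
    rw [hRcoeff _ (by omega), show Q2 - 2 - (Q2 - 4) = 2 from by omega]
    simp [hsig2]
  -- the key coefficient relation
  have hquad : (X - C a) * (X - C b) = X ^ 2 - C (a + b) * X + C (a * b) := by
    rw [C_add, C_mul]; ring
  have keyj : ∀ j, R.coeff j - (a + b) * R.coeff (j + 1) + (a * b) * R.coeff (j + 2) =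
      (if j + 2 = Q2 then (1 : F) else 0) - (if j + 2 = q then (1 : F) else 0) := by
    intro j
    have hc := congrArg (fun P : Polynomial F => P.coeff (j + 2)) hprod
    rw [hquad, coeff_mul_quad, coeff_sub, coeff_X_pow, coeff_X_pow] at hc
    simpa using hc
  have he : a + b = 0 := by
    have hk := keyj (Q2 - 3)
    rw [show Q2 - 3 + 1 = Q2 - 2 from by omega, show Q2 - 3 + 2 = Q2 - 1 from by omega,
      hRn1, hRn, hRtop (Q2 - 1) (by omega), if_neg (by omega), if_neg (by omega)] at hk
    have : -(a + b) = 0 := by linear_combination hk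
    linear_combination -this
  have hf2 : a * b = -sig2 := by
    have hk := keyj (Q2 - 4)
    rw [show Q2 - 4 + 1 = Q2 - 3 from by omega, show Q2 - 4 + 2 = Q2 - 2 from by omega,
      hRn1, hRn, hRn2, if_neg (by omega), if_neg (by omega)] at hk
    linear_combination hk
  have hmain : ∀ j, R.coeff j = sig2 * R.coeff (j + 2) +
      ((if j + 2 = Q2 then (1 : F) else 0) - (if j + 2 = q then (1 : F) else 0)) := by
    intro j
    have hk := keyj j
    rw [he, hf2] at hk
    linear_combination hk
  -- the descending recursion
  have claim1 : ∀ i, i < M → R.coeff (Q2 - 2 - 2 * i) = sig2 ^ i := by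
    intro i
    induction i with
    | zero => intro _; simpa using hRn
    | succ i ih =>
      intro hiM
      have hprev := ih (by omega)
      have hj := hmain (Q2 - 2 - 2 * (i + 1))
      rw [show Q2 - 2 - 2 * (i + 1) + 2 = Q2 - 2 - 2 * i from by omega,
        if_neg (by omega), if_neg (by omega), hprev] at hj
      rw [hj, ← pow_succ']
      ring_nf
  have hcq : R.coeff q = sig2 ^ (M - 1) := by
    have := claim1 (M - 1) (by omega)
    rwa [show Q2 - 2 - 2 * (M - 1) = q from by omega] at this
  have hcq2 : R.coeff (q - 2) = sig2 ^ M - 1 := by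
    have hj := hmain (q - 2)
    rw [show q - 2 + 2 = q from by omega, if_neg (by omega), if_pos rfl, hcq] at hj
    rw [hj]
    have hpow : sig2 * sig2 ^ (M - 1) = sig2 ^ M := by
      rw [← pow_succ']; congr 1; omega
    rw [hpow]; ring
  have claim2 : ∀ k', k' ≤ (q - 3) / 2 → R.coeff (q - 2 - 2 * k') = sig2 ^ (M + k') - sig2 ^ k' := by
    intro k'
    induction k' with
    | zero => intro _; simpa using hcq2
    | succ k' ih =>
      intro hk'
      have hprev := ih (by omega)
      have hj := hmain (q - 2 - 2 * (k' + 1))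
      rw [show q - 2 - 2 * (k' + 1) + 2 = q - 2 - 2 * k' from by omega,
        if_neg (by omega), if_neg (by omega), hprev] at hj
      rw [hj, mul_sub, ← pow_succ', ← pow_succ']
      rw [show M + k' + 1 = M + (k' + 1) from by omega]
      ring
  -- final assembly
  intro k hk
  have hidx : Q2 - 2 - (q - 2 - 2 * k) = Q2 - q + 2 * k := by omega
  have hcoeff := hRcoeff (q - 2 - 2 * k) (by omega)
  rw [hidx, show Q2 - q + 2 * k = 2 * (M + k) from by omega, pow_mul] at hcoeff
  norm_num at hcoeff
  have hfin : sU.esymm (2 * (M + k)) = sig2 ^ (M + k) - sig2 ^ k := by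
    rw [← hcoeff]
    have := claim2 k hk
    rw [this]
  show sU.esymm (Q2 - q + 2 * k) = sU.esymm 2 ^ ((Q2 - q + 2 * k) / 2) - sU.esymm 2 ^ k
  rw [show Q2 - q + 2 * k = 2 * (M + k) from by omega, hfin,
    show 2 * (M + k) / 2 = M + k from by omega]
end
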